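/- Let V : ℝ → ℝ be differentiable with V(t) = ‖x̃(t)‖² for a continuous x̃ : ℝ → ℝ^N, and suppose that whenever ‖x̃(t)‖ > B (for a fixed B ≥ 0) we have V̇(t) < 0, and moreover V̇(t) ≤ -α(‖x̃(t)‖ - B) for some α > 0 whenever ‖x̃(t)‖ > B. Then limsup_{t→∞} ‖x̃(t)‖ ≤ B. -/

import Mathlib

open Filter

theorem ultimate_boundedness (N : ℕ) (B α : ℝ) (hB : 0 ≤ B) (hα : 0 < α)
    (xt : ℝ → EuclideanSpace ℝ (Fin N)) (hcont : Continuous xt)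
    (V : ℝ → ℝ) (hVdiff : Differentiable ℝ V)
    (hV : ∀ t, V t = ‖xt t‖ ^ 2)
    (hdec : ∀ t, ‖xt t‖ > B → deriv V t < 0)
    (hrate : ∀ t, ‖xt t‖ > B → deriv V t ≤ -α * (‖xt t‖ - B)) :
    limsup (fun t => ‖xt t‖) atTop ≤ B := by
  have hVnonneg : ∀ t, 0 ≤ V t := fun t => (hV t) ▸ pow_nonneg (norm_nonneg _) 2
  have hVcont : Continuous V := hVdiff.continuous
  -- key: for each ε > 0, eventually ‖xt t‖ ≤ B + ε
  have key : ∀ ε : ℝ, 0 < ε → ∀ᶠ t in atTop, ‖xt t‖ ≤ B + ε := by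
    intro ε hε
    set c : ℝ := (B + ε) ^ 2 with hc
    have hBε : 0 ≤ B + ε := by linarith
    -- if V t > c then ‖xt t‖ > B + ε
    have hgt : ∀ t, c < V t → B + ε < ‖xt t‖ := by
      intro t ht
      have := (hV t) ▸ ht
      exact lt_of_pow_lt_pow_left₀ 2 (norm_nonneg _) this
    -- if V t > c then ‖xt t‖ > B
    have hgtB : ∀ t, c < V t → B < ‖xt t‖ := fun t ht =>
      lt_of_le_of_lt (by linarith) (hgt t ht)
    -- rate bound: if V t > c then deriv V t ≤ -(α*ε)
    have hderiv : ∀ t, c < V t → deriv V t ≤ -(α * ε) := by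
      intro t ht
      have h1 := hrate t (hgtB t ht)
      have h2 := hgt t ht
      nlinarith
    -- Step 1: there exists t₀ with V t₀ ≤ c
    have step1 : ∃ t₀ : ℝ, V t₀ ≤ c := by
      by_contra h
      push_neg at h
      -- g t = V t + α ε t is antitone
      have hg : Antitone (fun t => V t + α * ε * t) := by
        apply antitone_of_deriv_nonpos
        · exact hVdiff.add (differentiable_id.const_mul _)
        · intro x
          have hd : HasDerivAt (fun t => V t + α * ε * t) (deriv V x + α * ε) x := by
            exact ((hVdiff x).hasDerivAt.add
              ((hasDerivAt_id' x).const_mul (α * ε))).congr_deriv (by ring)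
          rw [hd.deriv]
          have := hderiv x (h x)
          linarith
      set T : ℝ := V 0 / (α * ε) + 1 with hT
      have hαε : 0 < α * ε := mul_pos hα hε
      have hV00 := hVnonneg 0
      have hT0 : 0 ≤ T := by positivity
      have := hg hT0
      simp only [mul_zero, add_zero] at this
      have hTv : α * ε * T = V 0 + α * ε := by
        rw [hT, mul_add, mul_one, mul_div_assoc', mul_div_cancel_left₀ (V 0) hαε.ne']
      have : V T ≤ V 0 - α * ε * T := by linarith
      rw [hTv] at this
      have := hVnonneg T
      linarith
    obtain ⟨t₀, ht₀⟩ := step1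
    -- Step 2: invariance: ∀ t ≥ t₀, V t ≤ c
    have step2 : ∀ t, t₀ ≤ t → V t ≤ c := by
      intro t₁ ht₁
      by_contra hcon
      push_neg at hcon
      have ht₀₁ : t₀ < t₁ := by
        rcases eq_or_lt_of_le ht₁ with h | h
        · exact absurd (h ▸ ht₀) (not_le.mpr hcon)
        · exact h
      set S : Set ℝ := {s | s ∈ Set.Icc t₀ t₁ ∧ V s ≤ c} with hS
      have hSne : S.Nonempty := ⟨t₀, ⟨le_refl _, le_of_lt ht₀₁⟩, ht₀⟩
      have hSbdd : BddAbove S := ⟨t₁, fun s hs => hs.1.2⟩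
      have hSclosed : IsClosed S := by
        have : S = Set.Icc t₀ t₁ ∩ V ⁻¹' (Set.Iic c) := by
          ext s; simp [hS, Set.mem_Icc, and_assoc]
        rw [this]
        exact isClosed_Icc.inter (isClosed_Iic.preimage hVcont)
      set s₀ : ℝ := sSup S with hs₀
      have hs₀mem : s₀ ∈ S := hSclosed.csSup_mem hSne hSbdd
      have hs₀lt : s₀ < t₁ := by
        rcases eq_or_lt_of_le hs₀mem.1.2 with h | h
        · exact absurd (h ▸ hs₀mem.2) (not_le.mpr hcon)
        · exact h
      -- on (s₀, t₁), V > c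
      have hmid : ∀ u, s₀ < u → u < t₁ → c < V u := by
        intro u hu1 hu2
        by_contra h
        push_neg at h
        have : u ∈ S := ⟨⟨le_trans hs₀mem.1.1 (le_of_lt hu1), le_of_lt hu2⟩, h⟩
        exact absurd (le_csSup hSbdd this) (not_le.mpr hu1)
      -- V antitone on [s₀, t₁]
      have hanti : AntitoneOn V (Set.Icc s₀ t₁) := by
        apply antitoneOn_of_deriv_nonpos (convex_Icc _ _) hVcont.continuousOn
          hVdiff.differentiableOn
        intro x hx
        rw [interior_Icc] at hx
        exact le_of_lt (hdec x (hgtB x (hmid x hx.1 hx.2)))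
      have := hanti (Set.left_mem_Icc.mpr (le_of_lt hs₀lt))
        (Set.right_mem_Icc.mpr (le_of_lt hs₀lt)) (le_of_lt hs₀lt)
      have := hs₀mem.2
      linarith
    -- conclude eventual bound
    filter_upwards [eventually_ge_atTop t₀] with t ht
    have := step2 t ht
    rw [hV t] at this
    by_contra hcon2
    push_neg at hcon2
    have := pow_lt_pow_left₀ hcon2 hBε two_ne_zero
    linarith
  -- finish: limsup ≤ B + ε for all ε > 0
  have hcob : IsCoboundedUnder (· ≤ ·) atTop (fun t => ‖xt t‖) :=
    isCoboundedUnder_le_of_le atTop (x := 0) (fun t => norm_nonneg _)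
  refine le_of_forall_pos_le_add ?_
  intro ε hε
  exact limsup_le_of_le hcob (key ε hε)
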